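/- Fix a positive integer n. Let E ∈ Ar_n be the constant function 1 and μ the Möbius function reduced mod n. For f, h ∈ Ar_n with f∗E ∈ R_n: if h∗μ ∈ R_n then h∗f ∈ R_n. If moreover f is a unit in Ar_n, then h∗μ ∈ R_n if and only if h∗f ∈ R_n, and h∗E ∈ R_n if and only if h∗f⁻¹ ∈ R_n. -/

import Mathlib

/-- Membership in the subring `R_n` of special arithmetic functions mod `n`. -/
def Rn (n : ℕ) (f : ArithmeticFunction (ZMod n)) : Prop :=
  ∀ t : ℕ, t ∣ n → (t : ZMod n) ∣ f t

/-- The constant function `1` (on positive integers), as an arithmetic function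
with values in `ZMod n`. -/
def Efun (n : ℕ) : ArithmeticFunction (ZMod n) :=
  ⟨fun a => if a = 0 then 0 else 1, by simp⟩

/-- The classical Möbius function reduced mod `n`. -/
noncomputable def muMod (n : ℕ) : ArithmeticFunction (ZMod n) :=
  ⟨fun a => ((ArithmeticFunction.moebius a : ℤ) : ZMod n), by simp⟩

lemma muE (n : ℕ) : muMod n * Efun n = 1 := by
  have h1 : muMod n = ((ArithmeticFunction.moebius : ArithmeticFunction ℤ) :
      ArithmeticFunction (ZMod n)) := by
    ext a; simp [muMod]
  have h2 : Efun n = ((ArithmeticFunction.zeta : ArithmeticFunction ℕ) :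
      ArithmeticFunction (ZMod n)) := by
    ext a; simp [Efun, ArithmeticFunction.zeta_apply]
  rw [h1, h2, ArithmeticFunction.coe_moebius_mul_coe_zeta]

lemma Rn_mul {n : ℕ} {a b : ArithmeticFunction (ZMod n)}
    (ha : Rn n a) (hb : Rn n b) : Rn n (a * b) := by
  intro t ht
  rw [ArithmeticFunction.mul_apply]
  apply Finset.dvd_sum
  intro p hp
  obtain ⟨hpd, -⟩ := Nat.mem_divisorsAntidiagonal.mp hp
  have hd1 : p.1 ∣ t := ⟨p.2, hpd.symm⟩
  have hd2 : p.2 ∣ t := ⟨p.1, by rw [← hpd]; ring⟩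
  obtain ⟨x, hx⟩ := ha p.1 (hd1.trans ht)
  obtain ⟨y, hy⟩ := hb p.2 (hd2.trans ht)
  refine ⟨x * y, ?_⟩
  rw [hx, hy, ← hpd]
  push_cast
  ring

lemma Rn_inv {n : ℕ} (hn : 0 < n) {u v : ArithmeticFunction (ZMod n)}
    (huv : u * v = 1) (hu : Rn n u) : Rn n v := by
  have hu1 : IsUnit (u 1) := by
    have h1 : u 1 * v 1 = 1 := by
      have := congrArg (fun g : ArithmeticFunction (ZMod n) => g 1) huv
      simpa [ArithmeticFunction.mul_apply] using this
    exact isUnit_iff_exists_inv.mpr ⟨_, h1⟩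
  intro t
  induction t using Nat.strong_induction_on with
  | _ t ih =>
    intro ht
    have ht0 : t ≠ 0 := by rintro rfl; exact absurd (Nat.eq_zero_of_zero_dvd ht) hn.ne'
    rcases eq_or_ne t 1 with rfl | ht1
    · simp
    · have key : (t : ZMod n) ∣ u 1 * v t := by
        have hsum : (u * v) t = 0 := by
          rw [huv]; simp [ArithmeticFunction.one_apply, ht1]
        have hmem : ((1, t)) ∈ t.divisorsAntidiagonal := by
          simp [Nat.mem_divisorsAntidiagonal, ht0]
        rw [ArithmeticFunction.mul_apply, ← Finset.add_sum_erase _ _ hmem] at hsum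
        have hvt : u 1 * v t = -∑ p ∈ t.divisorsAntidiagonal.erase (1, t), u p.1 * v p.2 :=
          eq_neg_of_add_eq_zero_left hsum
        rw [hvt, dvd_neg]
        apply Finset.dvd_sum
        intro p hp
        obtain ⟨hpne, hp'⟩ := Finset.mem_erase.mp hp
        obtain ⟨hpd, -⟩ := Nat.mem_divisorsAntidiagonal.mp hp'
        have hp1 : p.1 ≠ 1 := by
          rintro h1
          apply hpne
          have : p.2 = t := by rw [← hpd, h1, one_mul]
          exact Prod.ext h1 this
        have hp10 : p.1 ≠ 0 := by
          rintro h0; rw [h0, zero_mul] at hpd; exact ht0 hpd.symm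
        have hp1pos : 1 < p.1 := by omega
        have hp2pos : 0 < p.2 := by
          rcases Nat.eq_zero_or_pos p.2 with h0 | h0
          · exfalso; rw [h0, mul_zero] at hpd; exact ht0 hpd.symm
          · exact h0
        have hp2lt : p.2 < t := by nlinarith
        have hd1 : p.1 ∣ t := ⟨p.2, hpd.symm⟩
        have hd2 : p.2 ∣ t := ⟨p.1, by rw [← hpd]; ring⟩
        obtain ⟨x, hx⟩ := hu p.1 (hd1.trans ht)
        obtain ⟨y, hy⟩ := ih p.2 hp2lt (hd2.trans ht)
        refine ⟨x * y, ?_⟩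
        rw [hx, hy, ← hpd]
        push_cast
        ring
      obtain ⟨w, hw⟩ := key
      refine ⟨(hu1.unit⁻¹ : (ZMod n)ˣ) * w, ?_⟩
      have := congrArg (fun z => ((hu1.unit⁻¹ : (ZMod n)ˣ) : ZMod n) * z) hw
      calc v t = ((hu1.unit⁻¹ : (ZMod n)ˣ) : ZMod n) * (u 1 * v t) := by
            rw [← mul_assoc, IsUnit.val_inv_mul, one_mul]
        _ = (t : ZMod n) * (((hu1.unit⁻¹ : (ZMod n)ˣ) : ZMod n) * w) := by rw [hw]; ring

/-- Corollary 3.3: for `f, h` arithmetic functions mod `n` with `f ∗ E` special: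
(a) `h ∗ μ` special implies `h ∗ f` special; and if `f` is a unit,
(b) `h ∗ μ` special iff `h ∗ f` special, and (c) `h ∗ E` special iff `h ∗ f⁻¹` special. -/
theorem stmt5 (n : ℕ) (hn : 0 < n) (f h : ArithmeticFunction (ZMod n))
    (hfE : Rn n (f * Efun n)) :
    (Rn n (h * muMod n) → Rn n (h * f)) ∧
    (∀ hf : IsUnit f,
      ((Rn n (h * muMod n) ↔ Rn n (h * f)) ∧
       (Rn n (h * Efun n) ↔
         Rn n (h * ((hf.unit⁻¹ : (ArithmeticFunction (ZMod n))ˣ) :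
           ArithmeticFunction (ZMod n)))))) := by
  have hME := muE n
  have part_a : Rn n (h * muMod n) → Rn n (h * f) := by
    intro hmu
    have heq : h * f = (h * muMod n) * (f * Efun n) := by
      have : (h * muMod n) * (f * Efun n) = (h * f) * (muMod n * Efun n) := by ring
      rw [this, hME, mul_one]
    rw [heq]
    exact Rn_mul hmu hfE
  refine ⟨part_a, fun hf => ?_⟩
  set g : ArithmeticFunction (ZMod n) :=
    ((hf.unit⁻¹ : (ArithmeticFunction (ZMod n))ˣ) : ArithmeticFunction (ZMod n)) with hg
  have hfg : f * g = 1 := hf.mul_val_inv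
  have hinv : Rn n (g * muMod n) := by
    apply Rn_inv hn (u := f * Efun n) _ hfE
    calc (f * Efun n) * (g * muMod n) = (f * g) * (muMod n * Efun n) := by ring
      _ = 1 := by rw [hfg, hME, mul_one]
  constructor
  · refine ⟨part_a, fun hhf => ?_⟩
    have heq : h * muMod n = (h * f) * (g * muMod n) := by
      have : (h * f) * (g * muMod n) = (h * muMod n) * (f * g) := by ring
      rw [this, hfg, mul_one]
    rw [heq]
    exact Rn_mul hhf hinv
  · constructor
    · intro hhE
      have heq : h * g = (h * Efun n) * (g * muMod n) := by
        have : (h * Efun n) * (g * muMod n) = (h * g) * (muMod n * Efun n) := by ring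
        rw [this, hME, mul_one]
      rw [heq]
      exact Rn_mul hhE hinv
    · intro hhg
      have heq : h * Efun n = (h * g) * (f * Efun n) := by
        have : (h * g) * (f * Efun n) = (h * Efun n) * (f * g) := by ring
        rw [this, hfg, mul_one]
      rw [heq]
      exact Rn_mul hhg hfE
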